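/- Let G_1,...,G_N be i.i.d. standard Gumbel and w_1,...,w_N > 0. The indices of the k largest values of log w_i + G_i (in decreasing order) have the same joint distribution as sequential sampling without replacement from the categorical distribution with probabilities w_i/∑_j w_j: i.e., P(ordered top-k = (i_1,...,i_k)) = ∏_{t=1}^k w_{i_t} / (∑_j w_j − ∑_{s<t} w_{i_s}). -/

import Mathlib

open scoped ENNReal NNReal
open MeasureTheory ProbabilityTheory Real Set Filter Topology

-- piece 1: measurability of the event
lemma measEvent {N k : ℕ} (t : ℝ) (i : Fin k → Fin N) :
    MeasurableSet {x : Fin N → ℝ | (∀ j, t < x j) ∧ (∀ s u : Fin k, s < u → x (i s) < x (i u)) ∧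
      (∀ j ∉ Set.range i, ∀ m : Fin k, x (i m) < x j)} := by
  simp only [Set.setOf_and]
  refine MeasurableSet.inter ?_ (MeasurableSet.inter ?_ ?_)
  · rw [Set.setOf_forall]
    exact MeasurableSet.iInter fun j => measurableSet_lt measurable_const (measurable_pi_apply j)
  · rw [Set.setOf_forall]
    refine MeasurableSet.iInter fun s => ?_
    rw [Set.setOf_forall]
    refine MeasurableSet.iInter fun u => ?_
    by_cases h : s < u
    · simp only [h, true_implies]
      exact measurableSet_lt (measurable_pi_apply _) (measurable_pi_apply _)
    · simp [h]
  · rw [Set.setOf_forall]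
    refine MeasurableSet.iInter fun j => ?_
    by_cases h : j ∈ Set.range i
    · simp [h]
    · simp only [h, not_false_iff, true_implies]
      rw [Set.setOf_forall]
      exact MeasurableSet.iInter fun m =>
        measurableSet_lt (measurable_pi_apply _) (measurable_pi_apply _)

-- piece 2: exponential measure basic facts
lemma expMeasure_Iic {r : ℝ} (hr : 0 < r) (x : ℝ) :
    expMeasure r (Iic x) = ENNReal.ofReal (1 - Real.exp (-(r * x))) := by
  haveI := isProbabilityMeasure_expMeasure hr
  rw [← ofReal_cdf (expMeasure r) x]
  rw [cdf_expMeasure_eq hr]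
  by_cases h : 0 ≤ x
  · simp [h]
  · simp only [h, if_false]
    rw [ENNReal.ofReal_eq_zero.2 (by positivity), eq_comm, ENNReal.ofReal_eq_zero]
    have : 1 ≤ Real.exp (-(r * x)) := by
      apply Real.one_le_exp; nlinarith
    linarith

lemma expMeasure_Ioi {r : ℝ} (hr : 0 < r) {t : ℝ} (ht : 0 ≤ t) :
    expMeasure r (Ioi t) = ENNReal.ofReal (Real.exp (-(r * t))) := by
  haveI := isProbabilityMeasure_expMeasure hr
  have h1 : Real.exp (-(r * t)) ≤ 1 := Real.exp_le_one_iff.2 (by nlinarith)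
  rw [show Ioi t = (Iic t)ᶜ by simp, measure_compl measurableSet_Iic (measure_ne_top _ _),
    measure_univ, expMeasure_Iic hr]
  rw [← ENNReal.ofReal_one, ← ENNReal.ofReal_sub _ (by linarith)]
  norm_num

lemma lintegral_expMeasure {r : ℝ} (f : ℝ → ℝ≥0∞) (hf : Measurable f) :
    ∫⁻ y, f y ∂(expMeasure r) = ∫⁻ y, exponentialPDF r y * f y := by
  have h : expMeasure r = ((volume : Measure ℝ).withDensity (exponentialPDF r)) := rfl
  have h2 : Measurable (exponentialPDF r) := (measurable_exponentialPDFReal r).ennreal_ofReal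
  rw [h, lintegral_withDensity_eq_lintegral_mul _ h2 hf]
  rfl

lemma integral_aux {R : ℝ} (hR : 0 < R) (t : ℝ) :
    ∫ y in Ioi t, Real.exp (-(R * y)) = Real.exp (-(R * t)) / R := by
  have hderiv : ∀ x ∈ Ici t, HasDerivAt (fun y => -Real.exp (-(R * y)) / R)
      (Real.exp (-(R * x))) x := by
    intro x _
    have h1 : HasDerivAt (fun y : ℝ => -(R * y)) (-R) x := by
      simpa [Pi.neg_def] using ((hasDerivAt_id x).const_mul R).neg
    have h2 := (h1.exp).div_const R
    have h3 : HasDerivAt (fun y => -Real.exp (-(R * y)) / R)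
        (-(Real.exp (-(R * x)) * -R / R)) x := by simpa [neg_div, Pi.neg_def] using h2.neg
    convert h3 using 1
    field_simp
  have hint : IntegrableOn (fun y => Real.exp (-(R * y))) (Ioi t) := by
    have := exp_neg_integrableOn_Ioi t hR
    simpa [neg_mul] using this
  have htend : Tendsto (fun y => -Real.exp (-(R * y)) / R) atTop (𝓝 0) := by
    have h0 : Tendsto (fun y : ℝ => R * y) atTop atTop :=
      Tendsto.const_mul_atTop hR tendsto_id
    have := (Real.tendsto_exp_neg_atTop_nhds_zero.comp h0).neg.div_const R
    simpa using this
  rw [integral_Ioi_of_hasDerivAt_of_tendsto' hderiv hint htend]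
  field_simp
  ring

-- Gumbel: strict CDF
lemma gumbel_lt {Ω : Type*} [MeasurableSpace Ω] (μ : Measure Ω) [IsProbabilityMeasure μ]
    (g : Ω → ℝ) (hcdf : ∀ t, μ {ω | g ω ≤ t} = ENNReal.ofReal (Real.exp (-Real.exp (-t))))
    (c : ℝ) : μ {ω | g ω < c} = ENNReal.ofReal (Real.exp (-Real.exp (-c))) := by
  have hU : {ω | g ω < c} = ⋃ n : ℕ, {ω | g ω ≤ c - ((n : ℝ) + 1)⁻¹} := by
    ext ω
    simp only [mem_setOf_eq, mem_iUnion]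
    constructor
    · intro h
      obtain ⟨n, hn⟩ := exists_nat_one_div_lt (sub_pos.2 h)
      exact ⟨n, by rw [one_div] at hn; linarith⟩
    · rintro ⟨n, hn⟩
      have : (0:ℝ) < ((n : ℝ) + 1)⁻¹ := by positivity
      linarith
  have hmono : Monotone (fun n : ℕ => {ω | g ω ≤ c - ((n : ℝ) + 1)⁻¹}) := by
    intro a b hab ω h
    simp only [mem_setOf_eq] at h ⊢
    have : ((b : ℝ) + 1)⁻¹ ≤ ((a : ℝ) + 1)⁻¹ := by
      apply inv_anti₀ (by positivity)
      have : (a:ℝ) ≤ b := Nat.cast_le.2 hab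
      linarith
    linarith
  rw [hU, Directed.measure_iUnion hmono.directed_le]
  simp_rw [hcdf]
  have hm2 : Monotone (fun n : ℕ => ENNReal.ofReal (Real.exp (-Real.exp (-(c - ((n:ℝ)+1)⁻¹))))) := by
    intro a b hab
    apply ENNReal.ofReal_le_ofReal
    apply Real.exp_le_exp.2
    simp only [neg_le_neg_iff]
    apply Real.exp_le_exp.2
    simp only [neg_le_neg_iff, sub_le_sub_iff_left]
    apply inv_anti₀ (by positivity)
    have : (a:ℝ) ≤ b := Nat.cast_le.2 hab
    linarith
  have h1 : Tendsto (fun n : ℕ => ENNReal.ofReal (Real.exp (-Real.exp (-(c - ((n:ℝ)+1)⁻¹)))))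
      atTop (𝓝 (⨆ n : ℕ, ENNReal.ofReal (Real.exp (-Real.exp (-(c - ((n:ℝ)+1)⁻¹)))))) :=
    tendsto_atTop_iSup hm2
  have h2 : Tendsto (fun n : ℕ => ENNReal.ofReal (Real.exp (-Real.exp (-(c - ((n:ℝ)+1)⁻¹)))))
      atTop (𝓝 (ENNReal.ofReal (Real.exp (-Real.exp (-c))))) := by
    have hc : Tendsto (fun n : ℕ => c - ((n:ℝ)+1)⁻¹) atTop (𝓝 c) := by
      have := tendsto_one_div_add_atTop_nhds_zero_nat (𝕜 := ℝ)
      have h := (tendsto_const_nhds (x := c) (f := atTop)).sub this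
      simpa [one_div] using h
    exact (ENNReal.continuous_ofReal.tendsto _).comp
      ((Real.continuous_exp.tendsto _).comp
        (((Real.continuous_exp.tendsto _).comp (hc.neg)).neg))
  exact tendsto_nhds_unique h1 h2

lemma map_exp_neg {Ω : Type*} [MeasurableSpace Ω] (μ : Measure Ω) [IsProbabilityMeasure μ]
    (g : Ω → ℝ) (hg : Measurable g)
    (hcdf : ∀ t, μ {ω | g ω ≤ t} = ENNReal.ofReal (Real.exp (-Real.exp (-t))))
    {w : ℝ} (hw : 0 < w) :
    μ.map (fun ω => Real.exp (-(Real.log w + g ω))) = expMeasure w := by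
  haveI := isProbabilityMeasure_expMeasure hw
  have hY : Measurable fun ω => Real.exp (-(Real.log w + g ω)) :=
    Real.measurable_exp.comp ((hg.const_add (Real.log w)).neg)
  haveI : IsProbabilityMeasure (μ.map (fun ω => Real.exp (-(Real.log w + g ω)))) :=
    Measure.isProbabilityMeasure_map hY.aemeasurable
  refine Measure.ext_of_Iic _ _ fun x => ?_
  rw [Measure.map_apply hY measurableSet_Iic, expMeasure_Iic hw]
  rcases le_or_gt x 0 with hx | hx
  · have h0 : (fun ω => Real.exp (-(Real.log w + g ω))) ⁻¹' (Iic x) = ∅ := by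
      ext ω
      simp only [mem_preimage, mem_Iic, mem_empty_iff_false, iff_false, not_le]
      exact lt_of_le_of_lt hx (Real.exp_pos _)
    rw [h0, measure_empty, eq_comm, ENNReal.ofReal_eq_zero]
    have : 1 ≤ Real.exp (-(w * x)) := Real.one_le_exp (by nlinarith)
    linarith
  · have h0 : (fun ω => Real.exp (-(Real.log w + g ω))) ⁻¹' (Iic x)
        = {ω | g ω < -Real.log x - Real.log w}ᶜ := by
      ext ω
      simp only [mem_preimage, mem_Iic, mem_compl_iff, mem_setOf_eq, not_lt]
      rw [← Real.le_log_iff_exp_le hx]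
      constructor <;> intro h <;> linarith
    rw [h0, measure_compl (measurableSet_lt hg measurable_const) (measure_ne_top _ _),
      measure_univ, gumbel_lt μ g hcdf]
    have hexp : Real.exp (-(-Real.log x - Real.log w)) = w * x := by
      rw [show -(-Real.log x - Real.log w) = Real.log x + Real.log w by ring, Real.exp_add,
        Real.exp_log hx, Real.exp_log hw]
      ring
    rw [hexp, show Real.exp (-(w * x)) = Real.exp (-(w * x)) from rfl]
    have hle : Real.exp (-(w * x)) ≤ 1 := Real.exp_le_one_iff.2 (by nlinarith)
    rw [← ENNReal.ofReal_one, ← ENNReal.ofReal_sub _ (Real.exp_nonneg _)]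

lemma map_pi {Ω : Type*} [MeasurableSpace Ω] (μ : Measure Ω) [IsProbabilityMeasure μ]
    {N : ℕ} (Y : Fin N → Ω → ℝ) (hY : ∀ j, Measurable (Y j))
    (hind : iIndepFun Y μ)
    (ν : Fin N → Measure ℝ) [∀ j, SigmaFinite (ν j)] (hmap : ∀ j, μ.map (Y j) = ν j) :
    μ.map (fun ω j => Y j ω) = Measure.pi ν := by
  refine (Measure.pi_eq fun s hs => ?_).symm
  rw [Measure.map_apply (measurable_pi_lambda _ hY) (MeasurableSet.univ_pi hs)]
  have h1 : (fun ω j => Y j ω) ⁻¹' (univ.pi s) = ⋂ j, Y j ⁻¹' s j := by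
    ext ω; simp [Set.mem_univ_pi]
  rw [h1]
  have h2 := (iIndepFun_iff_measure_inter_preimage_eq_mul.1 hind) Finset.univ
    (sets := s) (fun j _ => hs j)
  simp only [Finset.mem_univ, Set.iInter_true] at h2
  rw [h2]
  exact Finset.prod_congr rfl fun j _ => by rw [← hmap j, Measure.map_apply (hY j) (hs j)]

lemma denom_lt {n k : ℕ} (w : Fin n → ℝ) (hw : ∀ j, 0 < w j) (i : Fin k → Fin n)
    (hi : Function.Injective i) (m : Fin k) :
    ∑ s ∈ Finset.univ.filter (fun s => s < m), w (i s) < ∑ j, w j := by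
  have himg : ∑ j ∈ (Finset.univ.filter (fun s => s < m)).image i, w j
      = ∑ s ∈ Finset.univ.filter (fun s => s < m), w (i s) :=
    Finset.sum_image (fun a _ b _ h => hi h)
  rw [← himg]
  refine Finset.sum_lt_sum_of_subset (Finset.subset_univ _) (Finset.mem_univ (i m)) ?_
    (hw (i m)) (fun j _ _ => (hw j).le)
  simp only [Finset.mem_image, Finset.mem_filter, Finset.mem_univ, true_and, not_exists]
  rintro s ⟨hs, hsi⟩
  exact absurd (hi hsi) hs.ne

lemma main_ind : ∀ (k N : ℕ) (w : Fin N → ℝ), (∀ j, 0 < w j) → ∀ (i : Fin k → Fin N),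
    Function.Injective i → ∀ t : ℝ, 0 ≤ t →
    Measure.pi (fun j => expMeasure (w j))
      {x : Fin N → ℝ | (∀ j, t < x j) ∧ (∀ s u : Fin k, s < u → x (i s) < x (i u)) ∧
        (∀ j ∉ Set.range i, ∀ m : Fin k, x (i m) < x j)}
    = ENNReal.ofReal (Real.exp (-(∑ j, w j) * t) *
        ∏ m : Fin k, w (i m) / ((∑ j, w j) -
          ∑ s ∈ Finset.univ.filter (fun s => s < m), w (i s))) := by
  intro k
  induction k with
  | zero =>
    intro N w hw i hi t ht
    haveI : ∀ j, IsProbabilityMeasure (expMeasure (w j)) :=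
      fun j => isProbabilityMeasure_expMeasure (hw j)
    have hset : {x : Fin N → ℝ | (∀ j, t < x j) ∧ (∀ s u : Fin 0, s < u → x (i s) < x (i u)) ∧
        (∀ j ∉ Set.range i, ∀ m : Fin 0, x (i m) < x j)} = Set.pi univ (fun _ => Ioi t) := by
      ext x
      simp [Set.mem_univ_pi]
    rw [hset, Measure.pi_pi]
    simp only [Finset.univ_eq_empty, Finset.prod_empty, mul_one]
    calc ∏ j, expMeasure (w j) (Ioi t) = ∏ j, ENNReal.ofReal (Real.exp (-(w j * t))) :=
          Finset.prod_congr rfl fun j _ => expMeasure_Ioi (hw j) ht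
      _ = ENNReal.ofReal (∏ j, Real.exp (-(w j * t))) :=
          (ENNReal.ofReal_prod_of_nonneg fun j _ => (Real.exp_nonneg _)).symm
      _ = ENNReal.ofReal (Real.exp (-(∑ j, w j) * t)) := by
          rw [← Real.exp_sum]
          congr 1
          rw [Finset.sum_neg_distrib, neg_mul, Finset.sum_mul]
  | succ k' IH =>
    intro N w hw i hi t ht
    haveI : ∀ j, IsProbabilityMeasure (expMeasure (w j)) :=
      fun j => isProbabilityMeasure_expMeasure (hw j)
    cases N with
    | zero => exact (i 0).elim0
    | succ N' =>
    set W := ∑ j, w j with hWdef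
    set p := i 0 with hp
    have hWpos : 0 < W := Finset.sum_pos (fun j _ => hw j) ⟨p, Finset.mem_univ p⟩
    have hne : ∀ m : Fin k', i m.succ ≠ p := fun m h => Fin.succ_ne_zero m (hi h)
    choose i' hi' using fun m => Fin.exists_succAbove_eq (hne m)
    have hi'inj : Function.Injective i' := by
      intro a b h
      have h2 : i a.succ = i b.succ := by rw [← hi' a, ← hi' b, h]
      exact Fin.succ_injective _ (hi h2)
    have hrange : ∀ j' : Fin N', (p.succAbove j' ∈ Set.range i ↔ j' ∈ Set.range i') := by
      intro j'
      constructor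
      · rintro ⟨m, hm⟩
        cases m using Fin.cases with
        | zero => exact absurd hm.symm (Fin.succAbove_ne p j')
        | succ m' =>
          rw [← hi' m'] at hm
          exact ⟨m', Fin.succAbove_right_injective hm⟩
      · rintro ⟨m', hm⟩
        exact ⟨m'.succ, by rw [← hi' m', hm]⟩
    set A := {x : Fin (N' + 1) → ℝ | (∀ j, t < x j) ∧
      (∀ s u : Fin (k' + 1), s < u → x (i s) < x (i u)) ∧
      (∀ j ∉ Set.range i, ∀ m : Fin (k' + 1), x (i m) < x j)} with hAdef
    have hz0 : ∀ (y : ℝ) (x' : Fin N' → ℝ), (p.insertNth y x' : Fin (N' + 1) → ℝ) (i 0) = y :=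
      fun y x' => by
      rw [show (i 0 : Fin (N' + 1)) = p from hp.symm]
      exact Fin.insertNth_apply_same (α := fun _ => ℝ) p y x'
    have hzs : ∀ (y : ℝ) (x' : Fin N' → ℝ) (j' : Fin N'),
        (p.insertNth y x' : Fin (N' + 1) → ℝ) (p.succAbove j') = x' j' := fun y x' j' =>
      Fin.insertNth_apply_succAbove (α := fun _ => ℝ) p y x' j'
    have hzm : ∀ (y : ℝ) (x' : Fin N' → ℝ) (m' : Fin k'),
        (p.insertNth y x' : Fin (N' + 1) → ℝ) (i m'.succ) = x' (i' m') := fun y x' m' => by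
      rw [← hi' m']; exact hzs y x' (i' m')
    have hsec : ∀ (y : ℝ) (x' : Fin N' → ℝ), p.insertNth y x' ∈ A ↔
        (t < y ∧ ((∀ j', y < x' j') ∧
          (∀ s u : Fin k', s < u → x' (i' s) < x' (i' u)) ∧
          (∀ j' ∉ Set.range i', ∀ m : Fin k', x' (i' m) < x' j'))) := by
      intro y x'
      constructor
      · rintro ⟨h1, h2, h3⟩
        have hty : t < y := by
          have := h1 p
          rwa [Fin.insertNth_apply_same] at this
        refine ⟨hty, ?_, ?_, ?_⟩
        · intro j'
          by_cases hj : j' ∈ Set.range i'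
          · obtain ⟨m', rfl⟩ := hj
            have := h2 0 m'.succ (Fin.succ_pos m')
            rwa [hz0, hzm] at this
          · have hj2 : p.succAbove j' ∉ Set.range i := fun h => hj ((hrange j').1 h)
            have := h3 _ hj2 0
            rwa [hz0, hzs] at this
        · intro s u hsu
          have := h2 s.succ u.succ (Fin.succ_lt_succ_iff.2 hsu)
          rwa [hzm, hzm] at this
        · intro j' hj m'
          have hj2 : p.succAbove j' ∉ Set.range i := fun h => hj ((hrange j').1 h)
          have := h3 _ hj2 m'.succ
          rwa [hzm, hzs] at this
      · rintro ⟨hty, h1, h2, h3⟩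
        refine ⟨?_, ?_, ?_⟩
        · intro j
          by_cases hj : j = p
          · rw [hj, Fin.insertNth_apply_same]; exact hty
          · obtain ⟨j', rfl⟩ := Fin.exists_succAbove_eq hj
            rw [hzs]; exact lt_trans hty (h1 j')
        · intro s u hsu
          cases u using Fin.cases with
          | zero => exact absurd hsu (by simp)
          | succ u' =>
            cases s using Fin.cases with
            | zero =>
              rw [hz0, hzm]; exact h1 (i' u')
            | succ s' =>
              rw [hzm, hzm]; exact h2 s' u' (Fin.succ_lt_succ_iff.1 hsu)
        · intro j hj m
          have hjp : j ≠ p := fun h => hj ⟨0, by rw [h, hp]⟩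
          obtain ⟨j', rfl⟩ := Fin.exists_succAbove_eq hjp
          have hj' : j' ∉ Set.range i' := fun h => hj ((hrange j').2 h)
          cases m using Fin.cases with
          | zero => rw [hz0, hzs]; exact h1 j'
          | succ m' => rw [hzm, hzs]; exact h3 j' hj' m'
    -- abbreviations for the reduced problem
    set W' := ∑ j' : Fin N', w (p.succAbove j') with hW'def
    set C' := ∏ m' : Fin k', w (p.succAbove (i' m')) /
      (W' - ∑ s ∈ Finset.univ.filter (fun s => s < m'), w (p.succAbove (i' s))) with hC'def
    have hWW : W = w p + W' := Fin.sum_univ_succAbove w p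
    have hC'nonneg : 0 ≤ C' := Finset.prod_nonneg fun m' _ => div_nonneg (hw _).le
      (sub_nonneg.2 (denom_lt (fun j' => w (p.succAbove j')) (fun j' => hw _) i' hi'inj m').le)
    have hA : MeasurableSet A := measEvent t i
    set e := MeasurableEquiv.piFinSuccAbove (fun _ : Fin (N' + 1) => ℝ) p with hedef
    have hmp := measurePreserving_piFinSuccAbove (fun j => expMeasure (w j)) p
    have h1 : Measure.pi (fun j => expMeasure (w j)) A
        = ((expMeasure (w p)).prod (Measure.pi fun j' => expMeasure (w (p.succAbove j'))))
          (e.symm ⁻¹' A) := ((hmp.symm e).measure_preimage hA.nullMeasurableSet).symm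
    rw [h1, Measure.prod_apply (hA.preimage e.symm.measurable)]
    have hsection : ∀ y : ℝ,
        (Measure.pi fun j' => expMeasure (w (p.succAbove j'))) (Prod.mk y ⁻¹' (e.symm ⁻¹' A))
        = Set.indicator (Ioi t)
            (fun y => ENNReal.ofReal (Real.exp ((-W') * y) * C')) y := by
      intro y
      have hpre : Prod.mk y ⁻¹' (e.symm ⁻¹' A) = {x' | p.insertNth y x' ∈ A} := by
        ext x'
        simp only [mem_preimage, mem_setOf_eq, hedef,
          MeasurableEquiv.piFinSuccAbove_symm_apply, Fin.insertNthEquiv, Equiv.coe_fn_mk]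
      by_cases hty : t < y
      · rw [Set.indicator_of_mem (mem_Ioi.2 hty), hpre]
        have hAy : {x' | p.insertNth y x' ∈ A} = {x' : Fin N' → ℝ | (∀ j', y < x' j') ∧
            (∀ s u : Fin k', s < u → x' (i' s) < x' (i' u)) ∧
            (∀ j' ∉ Set.range i', ∀ m : Fin k', x' (i' m) < x' j')} := by
          ext x'
          rw [mem_setOf_eq, hsec y x', mem_setOf_eq]
          simp only [hty, true_and]
        rw [hAy, IH N' (fun j' => w (p.succAbove j')) (fun j' => hw _) i' hi'inj y
          (le_of_lt (lt_of_le_of_lt ht hty))]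
      · rw [Set.indicator_of_notMem (by simpa using hty), hpre]
        have hem : {x' : Fin N' → ℝ | p.insertNth y x' ∈ A} = ∅ := by
          ext x'
          rw [mem_setOf_eq, hsec y x']
          simp [hty]
        rw [hem, measure_empty]
    simp_rw [hsection]
    have hfmeas : Measurable fun y : ℝ => ENNReal.ofReal (Real.exp ((-W') * y) * C') :=
      ((Real.continuous_exp.comp (continuous_const.mul continuous_id)).mul
        continuous_const).measurable.ennreal_ofReal
    rw [lintegral_expMeasure _ (hfmeas.indicator measurableSet_Ioi)]
    have hcomb : ∀ y : ℝ, exponentialPDF (w p) y *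
        Set.indicator (Ioi t) (fun y => ENNReal.ofReal (Real.exp ((-W') * y) * C')) y
        = Set.indicator (Ioi t) (fun y => ENNReal.ofReal
            ((w p * C') * Real.exp (-(W * y)))) y := by
      intro y
      by_cases h : y ∈ Ioi t
      · rw [Set.indicator_of_mem h, Set.indicator_of_mem h]
        have hy0 : (0:ℝ) ≤ y := le_trans ht (le_of_lt h)
        rw [exponentialPDF_of_nonneg hy0,
          ← ENNReal.ofReal_mul (mul_nonneg (hw p).le (Real.exp_nonneg _))]
        congr 1
        rw [show -(W * y) = -(w p * y) + (-W') * y by rw [hWW]; ring, Real.exp_add]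
        ring
      · rw [Set.indicator_of_notMem h, Set.indicator_of_notMem h, mul_zero]
    simp_rw [hcomb]
    rw [lintegral_indicator measurableSet_Ioi]
    have hint : IntegrableOn (fun y => (w p * C') * Real.exp (-(W * y))) (Ioi t) := by
      have h2 := (exp_neg_integrableOn_Ioi t hWpos).const_mul (w p * C')
      simpa [neg_mul, IntegrableOn] using h2
    rw [← ofReal_integral_eq_lintegral_ofReal hint (ae_of_all _ fun y =>
      mul_nonneg (mul_nonneg (hw p).le hC'nonneg) (Real.exp_nonneg _))]
    rw [integral_const_mul, integral_aux hWpos t]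
    have hfilter0 : (Finset.univ.filter (fun s : Fin (k' + 1) => s < 0)) = ∅ := by
      ext s; simp
    have hprod : (∏ m : Fin (k' + 1), w (i m) / (W -
        ∑ s ∈ Finset.univ.filter (fun s => s < m), w (i s))) = (w p / W) * C' := by
      rw [Fin.prod_univ_succ]
      congr 1
      · rw [hfilter0]
        simp [hp]
      · rw [hC'def]
        refine Finset.prod_congr rfl fun m' _ => ?_
        have hsum : ∑ s ∈ Finset.univ.filter (fun s => s < Fin.succ m'), w (i s)
            = w p + ∑ s ∈ Finset.univ.filter (fun s => s < m'), w (p.succAbove (i' s)) := by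
          rw [Finset.sum_filter, Finset.sum_filter, Fin.sum_univ_succ]
          congr 1
          · refine Finset.sum_congr rfl fun s' _ => ?_
            rw [hi' s']
            simp [Fin.succ_lt_succ_iff]
        rw [← hi' m', hsum, hWW]
        ring_nf
    rw [hprod]
    congr 1
    rw [neg_mul]
    ring


theorem stmt_5 {Ω : Type*} [MeasurableSpace Ω] (μ : Measure Ω) [IsProbabilityMeasure μ]
    (N : ℕ) (G : Fin N → Ω → ℝ) (hGmeas : ∀ i, Measurable (G i))
    (hindep : iIndepFun G μ)
    (hgumbel : ∀ i t, μ {ω | G i ω ≤ t} = ENNReal.ofReal (Real.exp (-Real.exp (-t))))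
    (w : Fin N → ℝ) (hw : ∀ i, 0 < w i)
    (k : ℕ) (hk : k ≤ N) (i : Fin k → Fin N) (hi : Function.Injective i) :
    μ {ω | (∀ s t : Fin k, s < t →
              Real.log (w (i t)) + G (i t) ω < Real.log (w (i s)) + G (i s) ω) ∧
           (∀ j, j ∉ Set.range i → ∀ t : Fin k,
              Real.log (w j) + G j ω < Real.log (w (i t)) + G (i t) ω)} =
    ENNReal.ofReal (∏ t : Fin k,
      w (i t) / ((∑ j, w j) - ∑ s ∈ Finset.univ.filter (fun s => s < t), w (i s))) := by
  haveI : ∀ j, IsProbabilityMeasure (expMeasure (w j)) :=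
    fun j => isProbabilityMeasure_expMeasure (hw j)
  set Y : Fin N → Ω → ℝ := fun j ω => Real.exp (-(Real.log (w j) + G j ω)) with hYdef
  have hYmeas : ∀ j, Measurable (Y j) := fun j =>
    Real.measurable_exp.comp (((hGmeas j).const_add (Real.log (w j))).neg)
  have hYind : iIndepFun Y μ := by
    have := hindep.comp (fun j x => Real.exp (-(Real.log (w j) + x)))
      (fun j => Real.measurable_exp.comp ((measurable_id.const_add (Real.log (w j))).neg))
    exact this
  have hYmap : ∀ j, μ.map (Y j) = expMeasure (w j) := fun j =>
    map_exp_neg μ (G j) (hGmeas j) (hgumbel j) (hw j)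
  have hpi : μ.map (fun ω j => Y j ω) = Measure.pi (fun j => expMeasure (w j)) :=
    map_pi μ Y hYmeas hYind _ hYmap
  set B := {x : Fin N → ℝ | (∀ j, (0:ℝ) < x j) ∧ (∀ s u : Fin k, s < u → x (i s) < x (i u)) ∧
      (∀ j ∉ Set.range i, ∀ m : Fin k, x (i m) < x j)} with hBdef
  have hBmeas : MeasurableSet B := measEvent 0 i
  have hev : {ω | (∀ s t : Fin k, s < t →
        Real.log (w (i t)) + G (i t) ω < Real.log (w (i s)) + G (i s) ω) ∧
      (∀ j, j ∉ Set.range i → ∀ t : Fin k,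
        Real.log (w j) + G j ω < Real.log (w (i t)) + G (i t) ω)}
      = (fun ω j => Y j ω) ⁻¹' B := by
    ext ω
    have key : ∀ a b : Fin N,
        (Real.log (w a) + G a ω < Real.log (w b) + G b ω ↔ Y b ω < Y a ω) := by
      intro a b
      simp only [hYdef, Real.exp_lt_exp, neg_lt_neg_iff]
    simp only [mem_setOf_eq, mem_preimage, hBdef]
    constructor
    · rintro ⟨h1, h2⟩
      exact ⟨fun j => Real.exp_pos _, fun s u hsu => (key _ _).1 (h1 s u hsu),
        fun j hj m => (key _ _).1 (h2 j hj m)⟩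
    · rintro ⟨h0, h1, h2⟩
      exact ⟨fun s u hsu => (key _ _).2 (h1 s u hsu), fun j hj m => (key _ _).2 (h2 j hj m)⟩
  rw [hev, ← Measure.map_apply (measurable_pi_lambda _ hYmeas) hBmeas, hpi,
    main_ind k N w hw i hi 0 le_rfl]
  norm_num
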